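/- With W, Â, B̂ as above: the wreath triple factorisation (W, Â, B̂) is nondegenerate (W ≠ ÂB̂) if and only if at least one of G_0 ≠ A_0B_0 or G_1 ≠ A_1B_1 holds. -/

import Mathlib

open scoped Pointwise

section Wreath

variable {G₀ G₁ : Type*} [Group G₀] [Group G₁]

/-- The automorphism of `(G₁ ⧸ A₁) → G₀` permuting coordinates by `σ`. -/
def wreathAut (G₀ : Type*) [Group G₀] {G₁ : Type*} [Group G₁] (A₁ : Subgroup G₁)
    (σ : G₁) : MulAut ((G₁ ⧸ A₁) → G₀) where
  toFun f := fun x => f (σ⁻¹ • x)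
  invFun f := fun x => f (σ • x)
  left_inv f := by funext x; simp
  right_inv f := by funext x; simp
  map_mul' f g := rfl

/-- The coordinate-permutation action of `G₁` on `(G₁ ⧸ A₁) → G₀`, as a
homomorphism into the automorphism group; this defines the wreath product
`G₀ ≀ G₁ = ((G₁ ⧸ A₁) → G₀) ⋊[wreathPhi G₀ A₁] G₁`. -/
def wreathPhi (G₀ : Type*) [Group G₀] {G₁ : Type*} [Group G₁] (A₁ : Subgroup G₁) :
    G₁ →* MulAut ((G₁ ⧸ A₁) → G₀) where
  toFun := wreathAut G₀ A₁
  map_one' := by ext f x; simp [wreathAut]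
  map_mul' σ τ := by ext f x; simp [wreathAut, mul_smul]

lemma wreath_smul_pt {A₁ : Subgroup G₁} {σ : G₁} (h : σ ∈ A₁) :
    σ • ((1 : G₁) : G₁ ⧸ A₁) = ((1 : G₁) : G₁ ⧸ A₁) := by
  rw [MulAction.Quotient.smul_mk]
  exact QuotientGroup.eq.mpr (by simpa using A₁.inv_mem h)

/-- The subgroup `Â = (A₀ × G₀^{ℓ-1}) ⋊ A₁` of the wreath product:
top component in `A₁`, and the coordinate at the base point `A₁ ∈ G₁ ⧸ A₁`
in `A₀`. -/
def wreathAhat (A₀ : Subgroup G₀) (A₁ : Subgroup G₁) :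
    Subgroup (((G₁ ⧸ A₁) → G₀) ⋊[wreathPhi G₀ A₁] G₁) where
  carrier := {w | w.right ∈ A₁ ∧ w.left ((1 : G₁) : G₁ ⧸ A₁) ∈ A₀}
  one_mem' := by
    refine ⟨A₁.one_mem, ?_⟩
    simp [SemidirectProduct.one_left]
  mul_mem' := by
    rintro a b ⟨ha1, ha2⟩ ⟨hb1, hb2⟩
    refine ⟨A₁.mul_mem ha1 hb1, ?_⟩
    rw [SemidirectProduct.mul_left]
    have : (wreathPhi G₀ A₁ a.right) b.left ((1 : G₁) : G₁ ⧸ A₁)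
        = b.left ((1 : G₁) : G₁ ⧸ A₁) := by
      show b.left (a.right⁻¹ • ((1 : G₁) : G₁ ⧸ A₁)) = _
      rw [wreath_smul_pt (A₁.inv_mem ha1)]
    rw [Pi.mul_apply, this]
    exact A₀.mul_mem ha2 hb2
  inv_mem' := by
    rintro a ⟨ha1, ha2⟩
    refine ⟨A₁.inv_mem ha1, ?_⟩
    rw [SemidirectProduct.inv_left]
    show a.left⁻¹ (a.right⁻¹⁻¹ • ((1 : G₁) : G₁ ⧸ A₁)) ∈ A₀
    rw [inv_inv, wreath_smul_pt ha1, Pi.inv_apply]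
    exact A₀.inv_mem ha2

/-- The subgroup `B̂ = B₀ ≀ B₁ = B₀^ℓ ⋊ B₁` of the wreath product. -/
def wreathBhat (B₀ : Subgroup G₀) (A₁ B₁ : Subgroup G₁) :
    Subgroup (((G₁ ⧸ A₁) → G₀) ⋊[wreathPhi G₀ A₁] G₁) where
  carrier := {w | w.right ∈ B₁ ∧ ∀ x, w.left x ∈ B₀}
  one_mem' := ⟨B₁.one_mem, fun x => by simp [SemidirectProduct.one_left]⟩
  mul_mem' := by
    rintro a b ⟨ha1, ha2⟩ ⟨hb1, hb2⟩
    refine ⟨B₁.mul_mem ha1 hb1, fun x => ?_⟩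
    rw [SemidirectProduct.mul_left, Pi.mul_apply]
    exact B₀.mul_mem (ha2 x) (hb2 _)
  inv_mem' := by
    rintro a ⟨ha1, ha2⟩
    refine ⟨B₁.inv_mem ha1, fun x => ?_⟩
    rw [SemidirectProduct.inv_left]
    show a.left⁻¹ (a.right⁻¹⁻¹ • x) ∈ B₀
    rw [Pi.inv_apply]
    exact B₀.inv_mem (ha2 _)

end Wreath

/-- Nondegeneracy of the wreath triple factorisation: `W ≠ ÂB̂` iff
`G₀ ≠ A₀B₀` or `G₁ ≠ A₁B₁`. -/
theorem wreath_nondegenerate_iff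
    {G₀ G₁ : Type*} [Group G₀] [Group G₁] [Fintype G₀] [Fintype G₁]
    (A₀ B₀ : Subgroup G₀) (A₁ B₁ : Subgroup G₁) :
    (wreathAhat A₀ A₁ : Set (((G₁ ⧸ A₁) → G₀) ⋊[wreathPhi G₀ A₁] G₁)) *
        (wreathBhat B₀ A₁ B₁ : Set (((G₁ ⧸ A₁) → G₀) ⋊[wreathPhi G₀ A₁] G₁)) ≠
        Set.univ ↔
      (A₀ : Set G₀) * (B₀ : Set G₀) ≠ Set.univ ∨
        (A₁ : Set G₁) * (B₁ : Set G₁) ≠ Set.univ := by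
  rw [Ne, Ne, Ne, ← not_and_or, not_iff_not]
  constructor
  · intro h
    constructor
    · ext g₀
      simp only [Set.mem_univ, iff_true]
      have hmem : (⟨fun _ => g₀, 1⟩ : ((G₁ ⧸ A₁) → G₀) ⋊[wreathPhi G₀ A₁] G₁) ∈
          (wreathAhat A₀ A₁ : Set (((G₁ ⧸ A₁) → G₀) ⋊[wreathPhi G₀ A₁] G₁)) *
          (wreathBhat B₀ A₁ B₁ : Set (((G₁ ⧸ A₁) → G₀) ⋊[wreathPhi G₀ A₁] G₁)) := by
        rw [h]; trivial
      obtain ⟨a, ha, b, hb, hab⟩ := hmem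
      obtain ⟨ha1, ha2⟩ := ha
      obtain ⟨hb1, hb2⟩ := hb
      have hl : (a * b).left = fun _ => g₀ := congrArg SemidirectProduct.left hab
      have := congrFun hl ((1 : G₁) : G₁ ⧸ A₁)
      rw [SemidirectProduct.mul_left, Pi.mul_apply] at this
      have hpt : (wreathPhi G₀ A₁ a.right) b.left ((1 : G₁) : G₁ ⧸ A₁)
          = b.left ((1 : G₁) : G₁ ⧸ A₁) := by
        show b.left (a.right⁻¹ • ((1 : G₁) : G₁ ⧸ A₁)) = _
        rw [wreath_smul_pt (A₁.inv_mem ha1)]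
      rw [hpt] at this
      exact ⟨a.left ((1:G₁) : G₁ ⧸ A₁), ha2, b.left ((1:G₁) : G₁ ⧸ A₁), hb2 _, this⟩
    · ext σ
      simp only [Set.mem_univ, iff_true]
      have hmem : (⟨1, σ⟩ : ((G₁ ⧸ A₁) → G₀) ⋊[wreathPhi G₀ A₁] G₁) ∈
          (wreathAhat A₀ A₁ : Set (((G₁ ⧸ A₁) → G₀) ⋊[wreathPhi G₀ A₁] G₁)) *
          (wreathBhat B₀ A₁ B₁ : Set (((G₁ ⧸ A₁) → G₀) ⋊[wreathPhi G₀ A₁] G₁)) := by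
        rw [h]; trivial
      obtain ⟨a, ha, b, hb, hab⟩ := hmem
      have hr : (a * b).right = σ := congrArg SemidirectProduct.right hab
      rw [SemidirectProduct.mul_right] at hr
      exact ⟨a.right, ha.1, b.right, hb.1, hr⟩
  · rintro ⟨h₀, h₁⟩
    ext w
    simp only [Set.mem_univ, iff_true]
    have hσ : w.right ∈ (A₁ : Set G₁) * (B₁ : Set G₁) := h₁ ▸ Set.mem_univ _
    obtain ⟨a₁, ha₁, b₁, hb₁, hab₁⟩ := hσ
    have hf : w.left ((1 : G₁) : G₁ ⧸ A₁) ∈ (A₀ : Set G₀) * (B₀ : Set G₀) :=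
      h₀ ▸ Set.mem_univ _
    obtain ⟨a₀, ha₀, b₀, hb₀, hab₀⟩ := hf
    set b : ((G₁ ⧸ A₁) → G₀) ⋊[wreathPhi G₀ A₁] G₁ := ⟨fun _ => b₀, b₁⟩ with hb
    refine ⟨w * b⁻¹, ⟨?_, ?_⟩, b, ⟨hb₁, fun x => hb₀⟩, by group⟩
    · show w.right * b.right⁻¹ ∈ A₁
      have : w.right * b₁⁻¹ = a₁ := by rw [← hab₁]; group
      rw [show b.right = b₁ from rfl, this]; exact ha₁
    · have hbl : (b⁻¹).left = fun _ => b₀⁻¹ := by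
        rw [SemidirectProduct.inv_left]
        funext x
        show ((fun (_ : G₁ ⧸ A₁) => b₀)⁻¹) (b.right⁻¹⁻¹ • x) = b₀⁻¹
        rfl
      show (w * b⁻¹).left ((1 : G₁) : G₁ ⧸ A₁) ∈ A₀
      rw [SemidirectProduct.mul_left, hbl, Pi.mul_apply]
      show w.left ((1:G₁) : G₁ ⧸ A₁) *
          (fun (_ : G₁ ⧸ A₁) => b₀⁻¹) (w.right⁻¹ • ((1:G₁) : G₁ ⧸ A₁)) ∈ A₀
      have : w.left ((1:G₁) : G₁ ⧸ A₁) * b₀⁻¹ = a₀ := by rw [← hab₀]; group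
      simpa [this] using ha₀
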